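/- Let ξ₁, …, ξ_N be distinct positive real numbers and let k₁ < k₂ < … < k_N be distinct natural numbers. Then the generalized Vandermonde matrix V with entries V_{ij} = ξ_i^{k_j} is invertible (its columns are linearly independent). -/

import Mathlib

open Polynomial

/-- Descartes-style bound: a nonzero "sparse polynomial" with `n` terms has
fewer than `n` distinct positive roots. -/
lemma sparse_pos_roots_lt : ∀ (n : ℕ) (c : Fin n → ℝ) (k : Fin n → ℕ),
    StrictMono k → (∃ j, c j ≠ 0) →
    ∀ S : Finset ℝ, (∀ x ∈ S, 0 < x ∧ ∑ j, c j * x ^ k j = 0) → S.card < n := by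
  intro n
  induction n with
  | zero => rintro c k _ ⟨j, _⟩; exact j.elim0
  | succ n ih =>
    intro c k hk hc S hS
    by_cases hcs : ∀ j : Fin n, c j.succ = 0
    · -- only the first coefficient can be nonzero; no positive roots at all
      have hc0 : c 0 ≠ 0 := by
        obtain ⟨j, hj⟩ := hc
        rcases Fin.eq_zero_or_eq_succ j with h0 | ⟨j', rfl⟩
        · rwa [h0] at hj
        · exact absurd (hcs j') hj
      have : S = ∅ := by
        rw [Finset.eq_empty_iff_forall_notMem]
        intro x hx
        obtain ⟨hx0, hsum⟩ := hS x hx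
        rw [Fin.sum_univ_succ] at hsum
        simp only [hcs, zero_mul, Finset.sum_const_zero, add_zero] at hsum
        exact (mul_ne_zero hc0 (ne_of_gt (pow_pos hx0 _))) hsum
      simp [this]
    · push_neg at hcs
      obtain ⟨j₀, hj₀⟩ := hcs
      -- derivative system
      set d : Fin n → ℝ := fun j => c j.succ * ((k j.succ - k 0 : ℕ) : ℝ) with hd
      set m : Fin n → ℕ := fun j => k j.succ - k 0 - 1 with hm
      have hk0lt : ∀ j : Fin n, k 0 < k j.succ := fun j => hk (Fin.succ_pos j)
      have hmmono : StrictMono m := by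
        intro a b hab
        have h1 := hk (Fin.succ_lt_succ_iff.mpr hab)
        have ha := hk0lt a
        have hb := hk0lt b
        simp only [hm]
        omega
      have hd0 : d j₀ ≠ 0 := by
        apply mul_ne_zero hj₀
        have := hk0lt j₀
        simp only [Nat.cast_ne_zero]
        omega
      -- the derivative polynomial
      set P : ℝ[X] := ∑ j, C (d j) * X ^ (m j) with hP
      have hPcoeff : P.coeff (m j₀) = d j₀ := by
        rw [hP, finset_sum_coeff]
        rw [Finset.sum_eq_single j₀]
        · simp
        · intro b _ hb
          have hne : m j₀ ≠ m b := fun h => hb (hmmono.injective h.symm)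
          simp [coeff_C_mul, coeff_X_pow, hne]
        · simp
      have hPne : P ≠ 0 := fun h => hd0 (by rw [← hPcoeff, h, coeff_zero])
      have hPeval : ∀ z : ℝ, P.eval z = ∑ j, d j * z ^ m j := by
        intro z; rw [hP, eval_finset_sum]; simp
      set T : Finset ℝ := P.roots.toFinset.filter (fun z => 0 < z) with hT
      -- every z ∈ T is a positive root of the derivative system
      have hTroots : ∀ z ∈ T, 0 < z ∧ ∑ j, d j * z ^ m j = 0 := by
        intro z hz
        rw [hT, Finset.mem_filter, Multiset.mem_toFinset, mem_roots hPne] at hz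
        exact ⟨hz.2, by rw [← hPeval]; exact hz.1⟩
      have hTcard : T.card < n := ih d m hmmono ⟨j₀, hd0⟩ T hTroots
      -- interleaving via Rolle
      have hinter : S.card ≤ (T \ S).card + 1 := by
        apply Finset.card_le_diff_of_interleaved
        intro x hx y hy hxy _
        obtain ⟨hx0, hxroot⟩ := hS x hx
        obtain ⟨hy0, hyroot⟩ := hS y hy
        set g : ℝ → ℝ := fun t => ∑ j, c j * t ^ (k j - k 0) with hg
        have hgderiv : ∀ t : ℝ,
            HasDerivAt g (∑ j, c j * (((k j - k 0 : ℕ) : ℝ) * t ^ (k j - k 0 - 1))) t := by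
          intro t
          exact HasDerivAt.fun_sum fun j _ => (hasDerivAt_pow (k j - k 0) t).const_mul (c j)
        have hgzero : ∀ t : ℝ, 0 < t → (∑ j, c j * t ^ k j = 0) → g t = 0 := by
          intro t ht hroot
          have : t ^ (k 0) * g t = ∑ j, c j * t ^ k j := by
            rw [hg, Finset.mul_sum]
            refine Finset.sum_congr rfl fun j _ => ?_
            have hle : k 0 ≤ k j := by
              rcases Fin.eq_zero_or_eq_succ j with h0 | ⟨j', rfl⟩
              · rw [h0]
              · exact le_of_lt (hk0lt j')
            rw [← mul_assoc, mul_comm (t ^ k 0) (c j), mul_assoc, ← pow_add]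
            congr 2
            omega
          have ht0 : t ^ (k 0) ≠ 0 := ne_of_gt (pow_pos ht _)
          have := this.trans hroot
          exact (mul_eq_zero.mp this).resolve_left ht0
        have hgx : g x = 0 := hgzero x hx0 hxroot
        have hgy : g y = 0 := hgzero y hy0 hyroot
        have hgc : ContinuousOn g (Set.Icc x y) :=
          fun t _ => ((hgderiv t).differentiableAt.continuousAt).continuousWithinAt
        obtain ⟨z, hz, hz0⟩ := exists_deriv_eq_zero hxy hgc (hgx.trans hgy.symm)
        refine ⟨z, ?_, hz.1, hz.2⟩
        have hzpos : 0 < z := lt_trans hx0 hz.1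
        have hderiv : deriv g z = ∑ j, c j * (((k j - k 0 : ℕ) : ℝ) * z ^ (k j - k 0 - 1)) :=
          (hgderiv z).deriv
        have hsum : ∑ j, c j * (((k j - k 0 : ℕ) : ℝ) * z ^ (k j - k 0 - 1)) = 0 := by
          rw [← hderiv]; exact hz0
        rw [Fin.sum_univ_succ] at hsum
        simp only [Nat.sub_self, Nat.cast_zero, zero_mul, mul_zero, zero_add] at hsum
        have hPz : P.eval z = 0 := by
          rw [hPeval]
          rw [← hsum]
          refine Finset.sum_congr rfl fun j _ => ?_
          simp only [hd, hm]
          ring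
        rw [hT, Finset.mem_filter, Multiset.mem_toFinset, mem_roots hPne]
        exact ⟨hPz, hzpos⟩
      calc S.card ≤ (T \ S).card + 1 := hinter
        _ ≤ T.card + 1 := by
          exact Nat.add_le_add_right (Finset.card_mono Finset.sdiff_subset) 1
        _ < n + 1 := Nat.add_lt_add_right hTcard 1

/-- Generalized Vandermonde: for distinct positive reals ξᵢ and strictly
increasing natural exponents kⱼ, the matrix (ξᵢ ^ kⱼ) is invertible. -/
theorem generalized_vandermonde_invertible (N : ℕ) (ξ : Fin N → ℝ) (k : Fin N → ℕ)
    (hpos : ∀ i, 0 < ξ i) (hdist : Function.Injective ξ) (hk : StrictMono k) :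
    IsUnit (Matrix.of fun i j : Fin N => ξ i ^ k j) := by
  set M : Matrix (Fin N) (Fin N) ℝ := Matrix.of fun i j : Fin N => ξ i ^ k j with hM
  rw [Matrix.isUnit_iff_isUnit_det, isUnit_iff_ne_zero]
  intro hdet
  obtain ⟨v, hv, hmv⟩ := (Matrix.exists_mulVec_eq_zero_iff).mpr hdet
  set S : Finset ℝ := Finset.univ.image ξ with hSdef
  have hScard : S.card = N := by
    rw [hSdef, Finset.card_image_of_injective _ hdist, Finset.card_univ, Fintype.card_fin]
  have hvj : ∃ j, v j ≠ 0 := by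
    by_contra h
    push_neg at h
    exact hv (funext h)
  have hroots : ∀ x ∈ S, 0 < x ∧ ∑ j, v j * x ^ k j = 0 := by
    intro x hx
    rw [hSdef, Finset.mem_image] at hx
    obtain ⟨i, _, rfl⟩ := hx
    refine ⟨hpos i, ?_⟩
    have := congrFun hmv i
    rw [Matrix.mulVec, dotProduct] at this
    simp only [hM, Matrix.of_apply, Pi.zero_apply] at this
    rw [← this]
    exact Finset.sum_congr rfl fun j _ => mul_comm _ _
  have := sparse_pos_roots_lt N v k hk hvj S hroots
  omega
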